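/- Every countably infinite vertex-transitive graph of connectivity 1 has distinguishing number 2. -/

import Mathlib

open SimpleGraph

section DistinguishingAux

variable {V : Type*} {G : SimpleGraph V}

/-- `a` and `b` are joined by a walk avoiding `w`. -/
def RA (G : SimpleGraph V) (w a b : V) : Prop := ∃ p : G.Walk a b, w ∉ p.support

/-- `w` is a cut vertex. -/
def IsCutVtx (G : SimpleGraph V) (w : V) : Prop := ∃ a b : V, a ≠ w ∧ b ≠ w ∧ ¬ RA G w a b

lemma RA.symm' {w a b : V} (h : RA G w a b) : RA G w b a := by
  obtain ⟨p, hp⟩ := h; exact ⟨p.reverse, by simpa using hp⟩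

lemma RA.trans' {w a b c : V} (h1 : RA G w a b) (h2 : RA G w b c) : RA G w a c := by
  obtain ⟨p, hp⟩ := h1; obtain ⟨q, hq⟩ := h2
  exact ⟨p.append q, by
    intro hw
    rcases (SimpleGraph.Walk.mem_support_append_iff _ _).1 hw with h | h
    exacts [hp h, hq h]⟩

lemma RA.of_adj' {w a b : V} (h : G.Adj a b) (ha : a ≠ w) (hb : b ≠ w) : RA G w a b :=
  ⟨h.toWalk, by
    simp only [SimpleGraph.Walk.support_cons, SimpleGraph.Walk.support_nil, List.mem_cons,
      List.mem_singleton]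
    rintro (rfl | rfl | h') <;> simp_all⟩

lemma RA.refl' {w a : V} (h : a ≠ w) : RA G w a a :=
  ⟨SimpleGraph.Walk.nil, by simpa using fun h' => h h'.symm⟩

lemma dist_add_dist_le_length' {a b w : V} (p : G.Walk a b) (hw : w ∈ p.support) :
    G.dist a w + G.dist w b ≤ p.length := by
  classical
  have h := p.take_spec hw
  have hlen : (p.takeUntil w hw).length + (p.dropUntil w hw).length = p.length := by
    rw [← SimpleGraph.Walk.length_append, h]
  calc G.dist a w + G.dist w b ≤ (p.takeUntil w hw).length + (p.dropUntil w hw).length :=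
        Nat.add_le_add (SimpleGraph.dist_le _) (SimpleGraph.dist_le _)
    _ = p.length := hlen

lemma dist_split' (hconn : G.Connected) {a b w : V} (h : ¬ RA G w a b) :
    G.dist a b = G.dist a w + G.dist w b := by
  refine le_antisymm (hconn.dist_triangle) ?_
  obtain ⟨p, hp⟩ := hconn.exists_walk_length_eq_dist a b
  have hw : w ∈ p.support := by
    by_contra h'
    exact h ⟨p, h'⟩
  calc G.dist a w + G.dist w b ≤ p.length := dist_add_dist_le_length' p hw
    _ = G.dist a b := hp

lemma iso_dist' (g : G ≃g G) (a b : V) : G.dist (g a) (g b) = G.dist a b := by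
  have key : ∀ (h : G ≃g G) (x y : V), G.dist (h x) (h y) ≤ G.dist x y := by
    intro h x y
    rcases le_or_gt (G.dist x y) (G.dist (h x) (h y)) with hle | hlt
    · rcases Nat.eq_or_lt_of_le hle with heq | hlt'
      · omega
      · by_cases hr : G.Reachable x y
        · obtain ⟨p, hp⟩ := hr.exists_walk_length_eq_dist
          have := SimpleGraph.dist_le (p.map h.toHom)
          rwa [SimpleGraph.Walk.length_map, hp] at this
        · have hr2 : ¬ G.Reachable (h x) (h y) := by
            intro ⟨q⟩
            exact hr ⟨(q.map h.symm.toHom).copy (by simp) (by simp)⟩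
          simp [SimpleGraph.dist_eq_zero_of_not_reachable hr,
            SimpleGraph.dist_eq_zero_of_not_reachable hr2]
    · omega
  refine le_antisymm (key g a b) ?_
  have := key g.symm (g a) (g b)
  simpa using this

lemma walk_avoid_to_induce' {δ : V} : ∀ {a b : V} (p : G.Walk a b), δ ∉ p.support →
    ∀ (ha : a ≠ δ) (hb : b ≠ δ),
    (G.induce {v : V | v ≠ δ}).Reachable ⟨a, ha⟩ ⟨b, hb⟩ := by
  intro a b p
  induction p with
  | nil => intro _ ha hb; rfl
  | @cons a c b h q ih =>
    intro hs ha hb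
    rw [SimpleGraph.Walk.support_cons, List.mem_cons] at hs
    push_neg at hs
    have hc : c ≠ δ := by
      intro h'; exact hs.2 (h' ▸ q.start_mem_support)
    have hadj : (G.induce {v : V | v ≠ δ}).Adj ⟨a, ha⟩ ⟨c, hc⟩ := h
    exact hadj.reachable.trans (ih hs.2 hc hb)

lemma isCut_of_hcut' [Infinite V] {δ : V} (h : ¬ (G.induce {v : V | v ≠ δ}).Connected) :
    IsCutVtx G δ := by
  have hne : Nonempty {v : V | v ≠ δ} := by
    obtain ⟨x, hx⟩ := exists_ne δ
    exact ⟨⟨x, hx⟩⟩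
  have hpre : ¬ (G.induce {v : V | v ≠ δ}).Preconnected := fun hp =>
    h ((SimpleGraph.connected_iff _).mpr ⟨hp, hne⟩)
  rw [SimpleGraph.Preconnected] at hpre
  push_neg at hpre
  obtain ⟨⟨a, ha⟩, ⟨b, hb⟩, hr⟩ := hpre
  exact ⟨a, b, ha, hb, fun ⟨p, hp⟩ => hr (walk_avoid_to_induce' p hp ha hb)⟩

lemma RA.map' (g : G ≃g G) {w a b : V} (h : RA G w a b) : RA G (g w) (g a) (g b) := by
  obtain ⟨p, hp⟩ := h
  refine ⟨p.map g.toHom, ?_⟩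
  rw [SimpleGraph.Walk.support_map]
  intro hmem
  obtain ⟨x, hx, hgx⟩ := List.mem_map.1 hmem
  exact hp ((g.injective hgx) ▸ hx)

lemma IsCutVtx.map' (g : G ≃g G) {w : V} (h : IsCutVtx G w) : IsCutVtx G (g w) := by
  obtain ⟨a, b, ha, hb, hab⟩ := h
  refine ⟨g a, g b, fun h' => ha (g.injective h'), fun h' => hb (g.injective h'), fun hra => ?_⟩
  have := hra.map' g.symm
  simpa using hab (by simpa using this)

lemma isCut_all' [Infinite V] (htrans : ∀ u v : V, ∃ g : G ≃g G, g u = v)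
    (hcut : ∃ δ : V, ¬ (G.induce {v : V | v ≠ δ}).Connected) (w : V) : IsCutVtx G w := by
  obtain ⟨δ, hδ⟩ := hcut
  obtain ⟨g, hg⟩ := htrans δ w
  exact hg ▸ (isCut_of_hcut' hδ).map' g

lemma exists_side' {w : V} (hC : IsCutVtx G w) {x : V} (_ : x ≠ w) :
    ∃ z, z ≠ w ∧ ¬ RA G w z x := by
  obtain ⟨a, b, ha, hb, hab⟩ := hC
  by_cases h1 : RA G w a x
  · exact ⟨b, hb, fun h2 => hab (h1.trans' h2.symm')⟩
  · exact ⟨a, ha, h1⟩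

lemma exists_adj_ra' {w : V} : ∀ {z : V} (_ : G.Walk z w) (_ : z ≠ w),
    ∃ y, G.Adj w y ∧ RA G w z y := by
  intro z p
  induction p with
  | nil => intro h; exact absurd rfl h
  | @cons z c w h q ih =>
    intro hz
    by_cases hc : c = w
    · exact ⟨z, (hc ▸ h).symm, RA.refl' hz⟩
    · obtain ⟨y, hy1, hy2⟩ := ih hc
      exact ⟨y, hy1, (RA.of_adj' h hz hc).trans' hy2⟩

lemma step_exists' (hconn : G.Connected) (hcutall : ∀ w, IsCutVtx G w) {p q : V}
    (h : p ≠ q) : ∃ y, G.Adj q y ∧ ¬ RA G q p y := by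
  obtain ⟨z, hz, hzp⟩ := exists_side' (hcutall q) h
  obtain ⟨wk⟩ := hconn z q
  obtain ⟨y, hy1, hy2⟩ := exists_adj_ra' wk hz
  exact ⟨y, hy1, fun hra => hzp (hy2.trans' hra.symm')⟩

lemma ray_exists (hconn : G.Connected) (hcutall : ∀ w, IsCutVtx G w) {b r1 : V}
    (hadj : G.Adj b r1) :
    ∃ r : ℕ → V, r 0 = b ∧ r 1 = r1 ∧ (∀ m, G.Adj (r m) (r (m+1))) ∧
      (∀ m, G.dist b (r m) = m) ∧ (∀ m, ¬ RA G (r m) b (r (m+1))) := by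
  classical
  have step' : ∀ p q : V, ∃ y, p ≠ q → G.Adj q y ∧ ¬ RA G q p y := by
    intro p q
    by_cases h : p ≠ q
    · obtain ⟨y, h1, h2⟩ := step_exists' hconn hcutall h
      exact ⟨y, fun _ => ⟨h1, h2⟩⟩
    · exact ⟨p, fun h' => absurd h' h⟩
  choose nxt hnxt using step'
  set rr : ℕ → V × V := fun n => Nat.rec (b, r1) (fun _ pq => (pq.2, nxt pq.1 pq.2)) n with hrr
  set r : ℕ → V := fun n => (rr n).1 with hr
  have hr0 : r 0 = b := rfl
  have hr1 : r 1 = r1 := rfl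
  have hsucc : ∀ n, r (n+1) = (rr n).2 := fun n => rfl
  have hstep : ∀ n, r (n+2) = nxt (r n) (r (n+1)) := by
    intro n
    have : rr (n+1) = ((rr n).2, nxt (rr n).1 (rr n).2) := rfl
    simp [hr, hsucc, this]
    rfl
  -- main invariant
  have main : ∀ n, G.Adj (r n) (r (n+1)) ∧ G.dist b (r n) = n ∧ G.dist b (r (n+1)) = n+1 ∧
      ¬ RA G (r n) b (r (n+1)) := by
    intro n
    induction n with
    | zero =>
      have e1 : r (0+1) = r1 := hr1
      refine ⟨?_, ?_, ?_, ?_⟩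
      · rw [hr0, e1]; exact hadj
      · rw [hr0]; simp
      · rw [e1]
        show G.dist b r1 = 1
        exact SimpleGraph.dist_eq_one_iff_adj.2 hadj
      · rw [hr0]
        rintro ⟨p, hp⟩
        exact hp p.start_mem_support
    | succ n ih =>
      obtain ⟨hA, hd0, hd1, hRA⟩ := ih
      have hne : r n ≠ r (n+1) := by
        intro h; rw [h] at hd0; omega
      have hx := hnxt (r n) (r (n+1)) hne
      rw [← hstep n] at hx
      obtain ⟨hA2, hRA2⟩ := hx
      -- b can reach r n avoiding r (n+1)
      have hbra : RA G (r (n+1)) b (r n) := by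
        obtain ⟨p, hp⟩ := hconn.exists_walk_length_eq_dist b (r n)
        refine ⟨p, fun hmem => ?_⟩
        have := dist_add_dist_le_length' p hmem
        rw [hp, hd0, hd1] at this
        have hpos : 0 < G.dist (r (n+1)) (r n) :=
          (hconn (r (n+1)) (r n)).pos_dist_of_ne (Ne.symm hne)
        omega
      have hRA3 : ¬ RA G (r (n+1)) b (r (n+2)) := by
        intro hra
        exact hRA2 (RA.trans' (RA.symm' hbra) hra)
      refine ⟨hA2, hd1, ?_, hRA3⟩
      rw [dist_split' hconn hRA3, hd1, SimpleGraph.dist_eq_one_iff_adj.2 hA2]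
  exact ⟨r, hr0, hr1, fun m => (main m).1, fun m => (main m).2.1, fun m => (main m).2.2.2⟩


lemma ext_cluster' (hconn : G.Connected) (hcutall : ∀ w, IsCutVtx G w) (F : Finset V)
    {u v : V} (huv : u ≠ v) :
    ∃ a : ℕ → V,
      (∀ i, G.Adj (a i) (a (i+1))) ∧
      (∀ x ∈ F, ∀ i j, i < j → G.dist x (a i) < G.dist x (a j)) ∧
      (∀ x ∈ F, ∀ i, 2 ≤ G.dist x (a i)) ∧
      (∀ i, G.dist (a i) v < G.dist (a i) u) := by
  classical
  obtain ⟨z, hz, hzu⟩ := exists_side' (hcutall v) huv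
  obtain ⟨wkzv⟩ := hconn z v
  obtain ⟨r1, hr1adj, hr1ra⟩ := exists_adj_ra' wkzv hz
  obtain ⟨r, h0, h1, hadjr, hdist, hRA⟩ := ray_exists hconn hcutall hr1adj
  rw [← h1] at hr1ra
  -- separation chain: every walk from v to r m visits all earlier r j
  have hchain : ∀ m, ∀ j < m, ∀ p : G.Walk v (r m), r j ∈ p.support := by
    intro m
    induction m with
    | zero => intro j hj; omega
    | succ m ih =>
      intro j hj p
      have hm : r m ∈ p.support := by
        by_contra h'
        exact hRA m ⟨p, h'⟩
      rcases Nat.lt_succ_iff_lt_or_eq.1 hj with hj' | rfl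
      · exact p.support_takeUntil_subset hm (ih j hj' (p.takeUntil (r m) hm))
      · exact hm
  have hrne : ∀ m, 1 ≤ m → r m ≠ v := by
    intro m hm h
    have := hdist m
    rw [h, SimpleGraph.dist_self] at this
    omega
  have hsep2 : ∀ j m, j < m → ¬ RA G (r m) (r j) (r (m+1)) := by
    rintro j m hjm ⟨W, hW⟩
    have hgr : RA G (r m) v (r j) := by
      obtain ⟨p, hp⟩ := hconn.exists_walk_length_eq_dist v (r j)
      refine ⟨p, fun hmem => ?_⟩
      have h2 := dist_add_dist_le_length' p hmem
      rw [hp, hdist j] at h2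
      have h3 := hdist m
      omega
    exact hRA m (hgr.trans' ⟨W, hW⟩)
  have hdmono : ∀ j m, j ≤ m → G.dist (r j) (r m) < G.dist (r j) (r (m+1)) := by
    intro j m hjm
    rcases eq_or_lt_of_le hjm with rfl | hlt
    · have : 0 < G.dist (r j) (r (j+1)) := (hconn _ _).pos_dist_of_ne (hadjr j).ne
      simpa [SimpleGraph.dist_self] using this
    · rw [dist_split' hconn (hsep2 j m hlt)]
      have : 0 < G.dist (r m) (r (m+1)) := (hconn _ _).pos_dist_of_ne (hadjr m).ne
      omega
  have hdmono' : ∀ j m m', j ≤ m → m < m' → G.dist (r j) (r m) < G.dist (r j) (r m') := by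
    intro j m m' hjm h
    induction m' with
    | zero => omega
    | succ k ih =>
      rcases Nat.lt_succ_iff_lt_or_eq.1 h with h' | rfl
      · exact (ih h').trans (hdmono j k (by omega))
      · exact hdmono j m hjm
  have hbranch : ∀ m, 1 ≤ m → RA G v (r 1) (r m) := by
    intro m
    induction m with
    | zero => omega
    | succ m ih =>
      intro _
      rcases Nat.eq_zero_or_pos m with rfl | hm
      · exact RA.refl' (hrne 1 le_rfl)
      · exact (ih hm).trans' (RA.of_adj' (hadjr m) (hrne m hm) (hrne (m+1) (by omega)))
  have hnotrau : ∀ m, 1 ≤ m → ¬ RA G v (r m) u := by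
    intro m hm hra
    exact hzu (hr1ra.trans' ((hbranch m hm).trans' hra))
  have hiv : ∀ m, 1 ≤ m → G.dist (r m) v < G.dist (r m) u := by
    intro m hm
    have hsplit : G.dist (r m) u = G.dist (r m) v + G.dist v u := dist_split' hconn (hnotrau m hm)
    have : 0 < G.dist v u := (hconn v u).pos_dist_of_ne (Ne.symm huv)
    omega
  set N : ℕ := (F.sup fun x => G.dist x v) + 1 with hN
  have hxN : ∀ x ∈ F, G.dist x v < N := fun x hx =>
    Nat.lt_succ_of_le (Finset.le_sup (f := fun x => G.dist x v) hx)
  have hrNv : G.dist (r N) v = N := by rw [SimpleGraph.dist_comm]; exact hdist N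
  have havoid : ∀ x ∈ F, ∀ m, N < m → ¬ RA G (r N) x (r m) := by
    intro x hx m hNm hra
    have h1 : RA G (r N) x v := by
      obtain ⟨p, hp⟩ := hconn.exists_walk_length_eq_dist x v
      refine ⟨p, fun hmem => ?_⟩
      have h2 := dist_add_dist_le_length' p hmem
      rw [hp] at h2
      have := hxN x hx
      omega
    obtain ⟨p, hp⟩ := (h1.symm').trans' hra
    exact hp (hchain m N hNm p)
  have hxrN : ∀ x ∈ F, 0 < G.dist x (r N) := by
    intro x hx
    refine (hconn x (r N)).pos_dist_of_ne fun h => ?_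
    have := hxN x hx
    rw [h, hrNv] at this
    omega
  refine ⟨fun i => r (N + 1 + i), ?_, ?_, ?_, ?_⟩
  · intro i
    have e : N + 1 + (i + 1) = (N + 1 + i) + 1 := by omega
    show G.Adj (r (N + 1 + i)) (r (N + 1 + (i + 1)))
    rw [e]
    exact hadjr _
  · intro x hx i j hij
    show G.dist x (r (N + 1 + i)) < G.dist x (r (N + 1 + j))
    have e1 : G.dist x (r (N+1+i)) = G.dist x (r N) + G.dist (r N) (r (N+1+i)) :=
      dist_split' hconn (havoid x hx _ (by omega))
    have e2 : G.dist x (r (N+1+j)) = G.dist x (r N) + G.dist (r N) (r (N+1+j)) :=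
      dist_split' hconn (havoid x hx _ (by omega))
    have := hdmono' N (N+1+i) (N+1+j) (by omega) (by omega)
    omega
  · intro x hx i
    show 2 ≤ G.dist x (r (N + 1 + i))
    have e1 : G.dist x (r (N+1+i)) = G.dist x (r N) + G.dist (r N) (r (N+1+i)) :=
      dist_split' hconn (havoid x hx _ (by omega))
    have h2 : 0 < G.dist (r N) (r (N+1+i)) := by
      have := hdmono' N N (N+1+i) le_rfl (by omega)
      simpa [SimpleGraph.dist_self] using this
    have := hxrN x hx
    omega
  · intro i
    show G.dist (r (N + 1 + i)) v < G.dist (r (N + 1 + i)) u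
    exact hiv _ (by omega)


lemma main_coloring [Countable V] [Infinite V] (hconn : G.Connected)
    (hcutall : ∀ w, IsCutVtx G w) :
    ∃ c : V → Fin 2, ∀ g : G ≃g G, (∀ v : V, c (g v) = c v) → ∀ v : V, g v = v := by
  classical
  haveI : Nonempty V := hconn.nonempty
  obtain ⟨e, he⟩ := exists_surjective_nat (V × V)
  obtain ⟨x₀, y₀, hx₀y₀⟩ := exists_pair_ne V
  set pr : ℕ → V × V := fun k => if (e k).1 = (e k).2 then (x₀, y₀) else e k with hpr
  have hprne : ∀ k, (pr k).1 ≠ (pr k).2 := by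
    intro k
    by_cases h : (e k).1 = (e k).2
    · simpa [hpr, h] using hx₀y₀
    · simpa [hpr, h] using h
  have hprsur : ∀ u v : V, u ≠ v → ∃ k, pr k = (u, v) := by
    intro u v h
    obtain ⟨k, hk⟩ := he (u, v)
    exact ⟨k, by simp [hpr, hk, h]⟩
  have hEXT : ∀ (F : Finset V) (k : ℕ), ∃ a : ℕ → V,
      (∀ i, G.Adj (a i) (a (i+1))) ∧
      (∀ x ∈ F, ∀ i j, i < j → G.dist x (a i) < G.dist x (a j)) ∧
      (∀ x ∈ F, ∀ i, 2 ≤ G.dist x (a i)) ∧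
      (∀ i, G.dist (a i) (pr k).2 < G.dist (a i) (pr k).1) :=
    fun F k => ext_cluster' hconn hcutall F (hprne k)
  choose clus spec1 spec2 spec3 spec4 using hEXT
  set Fk : ℕ → Finset V :=
    fun k => Nat.rec ∅ (fun k Fk => Fk ∪ (Finset.range (k+1)).image (clus Fk k)) k with hFk
  set A : ℕ → ℕ → V := fun k => clus (Fk k) k with hA
  have hFsucc : ∀ k, Fk (k+1) = Fk k ∪ (Finset.range (k+1)).image (A k) := fun k => rfl
  have spec1A : ∀ k i, G.Adj (A k i) (A k (i+1)) := fun k => spec1 (Fk k) k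
  have spec2A : ∀ k, ∀ x ∈ Fk k, ∀ i j, i < j → G.dist x (A k i) < G.dist x (A k j) :=
    fun k => spec2 (Fk k) k
  have spec3A : ∀ k, ∀ x ∈ Fk k, ∀ i, 2 ≤ G.dist x (A k i) := fun k => spec3 (Fk k) k
  have spec4A : ∀ k i, G.dist (A k i) (pr k).2 < G.dist (A k i) (pr k).1 :=
    fun k => spec4 (Fk k) k
  have hFmem : ∀ k x, x ∈ Fk k ↔ ∃ j, j < k ∧ ∃ i, i ≤ j ∧ A j i = x := by
    intro k
    induction k with
    | zero => intro x; simp [hFk]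
    | succ k ih =>
      intro x
      rw [hFsucc k]
      simp only [Finset.mem_union, Finset.mem_image, Finset.mem_range, ih]
      constructor
      · rintro (⟨j, hj, i, hi, rfl⟩ | ⟨i, hi, rfl⟩)
        · exact ⟨j, by omega, i, hi, rfl⟩
        · exact ⟨k, by omega, i, by omega, rfl⟩
      · rintro ⟨j, hj, i, hi, rfl⟩
        rcases Nat.lt_succ_iff_lt_or_eq.1 hj with h | rfl
        · exact Or.inl ⟨j, h, i, hi, rfl⟩
        · exact Or.inr ⟨i, by omega, rfl⟩
  have hmemF : ∀ j k, j < k → ∀ i, i ≤ j → A j i ∈ Fk k := by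
    intro j k hjk i hij
    exact (hFmem k _).2 ⟨j, hjk, i, hij, rfl⟩
  set Red : V → Prop := fun x => ∃ j, ∃ i, i ≤ j ∧ A j i = x with hRed
  -- cross-cluster distance bound
  have D1 : ∀ j k, j < k → ∀ i, i ≤ j → ∀ i', 2 ≤ G.dist (A j i) (A k i') := by
    intro j k hjk i hij i'
    exact spec3A k _ (hmemF j k hjk i hij) i'
  have D2 : ∀ j k i i', j ≠ k → i ≤ j → i' ≤ k → A j i ≠ A k i' := by
    intro j k i i' hjk hij hik h
    rcases Nat.lt_or_ge j k with hlt | hge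
    · have := D1 j k hlt i hij i'
      rw [h, SimpleGraph.dist_self] at this; omega
    · have hlt : k < j := by omega
      have := D1 k j hlt i' hik i
      rw [← h, SimpleGraph.dist_self] at this; omega
  have D3 : ∀ j k i i', j ≠ k → i ≤ j → i' ≤ k → ¬ G.Adj (A j i) (A k i') := by
    intro j k i i' hjk hij hik hadj
    rcases Nat.lt_or_ge j k with hlt | hge
    · have := D1 j k hlt i hij i'
      rw [SimpleGraph.dist_eq_one_iff_adj.2 hadj] at this; omega
    · have hlt : k < j := by omega
      have := D1 k j hlt i' hik i
      rw [SimpleGraph.dist_eq_one_iff_adj.2 hadj.symm] at this; omega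
  have s0mem : ∀ k, 1 ≤ k → A 0 0 ∈ Fk k := fun k hk => hmemF 0 k hk 0 le_rfl
  have D4 : ∀ k i i', i ≤ k → i' ≤ k → A k i = A k i' → i = i' := by
    intro k i i' hik hik' h
    rcases Nat.eq_zero_or_pos k with rfl | hk
    · omega
    · by_contra hne
      rcases Nat.lt_or_ge i i' with hlt | hge
      · have := spec2A k _ (s0mem k hk) i i' hlt
        rw [h] at this; omega
      · have hlt : i' < i := by omega
        have := spec2A k _ (s0mem k hk) i' i hlt
        rw [h] at this; omega
  -- red connectivity relation
  set Rel : V → V → Prop := fun x y => G.Adj x y ∧ Red x ∧ Red y with hRel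
  set RC : V → V → Prop := Relation.ReflTransGen Rel with hRC
  have hRelsymm : Symmetric Rel := fun x y ⟨h1, h2, h3⟩ => ⟨h1.symm, h3, h2⟩
  have hRCsymm : Symmetric RC := fun x y h => (@Relation.ReflTransGen.stdSymm _ Rel ⟨hRelsymm⟩).symm x y h
  have hRedA : ∀ k i, i ≤ k → Red (A k i) := fun k i hik => ⟨k, i, hik, rfl⟩
  have E1 : ∀ k i i', i ≤ k → i' ≤ k → RC (A k i) (A k i') := by
    have key : ∀ k i d, i + d ≤ k → RC (A k i) (A k (i + d)) := by
      intro k i d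
      induction d with
      | zero => intro _; exact Relation.ReflTransGen.refl
      | succ d ih =>
        intro h
        refine Relation.ReflTransGen.tail (ih (by omega)) ?_
        exact ⟨spec1A k (i + d), hRedA k _ (by omega), hRedA k _ (by omega)⟩
    intro k i i' hik hik'
    rcases le_or_gt i i' with h | h
    · have := key k i (i' - i) (by omega)
      rwa [Nat.add_sub_cancel' h] at this
    · have := key k i' (i - i') (by omega)
      rw [Nat.add_sub_cancel' (by omega : i' ≤ i)] at this
      exact hRCsymm this
  have E2 : ∀ k i, i ≤ k → ∀ y, RC (A k i) y → ∃ i', i' ≤ k ∧ y = A k i' := by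
    intro k i hik y h
    induction h with
    | refl => exact ⟨i, hik, rfl⟩
    | tail h1 h2 ih =>
      obtain ⟨i', hi', rfl⟩ := ih
      obtain ⟨hadj, _, hredc⟩ := h2
      obtain ⟨k'', i'', hi'', rfl⟩ := hredc
      by_cases hk : k'' = k
      · exact ⟨i'', hk ▸ hi'', by rw [hk]⟩
      · exact absurd hadj (fun hadj => D3 k k'' i' i'' (Ne.symm hk) hi' hi'' hadj)
  -- the coloring
  refine ⟨fun x => if Red x then 1 else 0, ?_⟩
  intro g hgc
  have hg : ∀ x, Red (g x) ↔ Red x := by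
    intro x
    have h := hgc x
    simp only at h
    by_cases h1 : Red (g x) <;> by_cases h2 : Red x
    · exact iff_of_true h1 h2
    · rw [if_pos h1, if_neg h2] at h
      exact absurd h (by decide)
    · rw [if_neg h1, if_pos h2] at h
      exact absurd h (by decide)
    · exact iff_of_false h1 h2
  have hgadj : ∀ x y, G.Adj (g x) (g y) ↔ G.Adj x y := fun x y => g.map_adj_iff
  have F1 : ∀ x y, RC x y → RC (g x) (g y) := by
    intro x y h
    induction h with
    | refl => exact Relation.ReflTransGen.refl
    | tail h1 h2 ih =>
      exact Relation.ReflTransGen.tail ih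
        ⟨(hgadj _ _).2 h2.1, (hg _).2 h2.2.1, (hg _).2 h2.2.2⟩
  -- clusters are preserved
  set P : ℕ → Finset V := fun k => (Finset.range (k+1)).image (A k) with hP
  have hPcard : ∀ k, (P k).card = k + 1 := by
    intro k
    rw [hP]
    rw [Finset.card_image_of_injOn, Finset.card_range]
    intro i hi i' hi' h
    exact D4 k i i' (by simpa using Nat.lt_succ_iff.1 (Finset.mem_range.1 hi))
      (by simpa using Nat.lt_succ_iff.1 (Finset.mem_range.1 hi')) h
  have hPmem : ∀ k x, x ∈ P k ↔ ∃ i, i ≤ k ∧ A k i = x := by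
    intro k x
    simp [hP, Finset.mem_image, Finset.mem_range, Nat.lt_succ_iff]
  have himg : ∀ (g' : G ≃g G), (∀ x, Red (g' x) ↔ Red x) → ∀ k, ∃ k', k ≤ k' ∧
      ∀ i, i ≤ k → g' (A k i) ∈ P k' := by
    intro g' hg' k
    have hgadj' : ∀ x y, G.Adj (g' x) (g' y) ↔ G.Adj x y := fun x y => g'.map_adj_iff
    have F1' : ∀ x y, RC x y → RC (g' x) (g' y) := by
      intro x y h
      induction h with
      | refl => exact Relation.ReflTransGen.refl
      | tail h1 h2 ih =>
        exact Relation.ReflTransGen.tail ih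
          ⟨(hgadj' _ _).2 h2.1, (hg' _).2 h2.2.1, (hg' _).2 h2.2.2⟩
    have hred0 : Red (g' (A k 0)) := (hg' _).2 (hRedA k 0 (by omega))
    obtain ⟨k', i₀, hi₀, hA0⟩ := hred0
    have hmem : ∀ i, i ≤ k → g' (A k i) ∈ P k' := by
      intro i hik
      have hrc : RC (A k 0) (A k i) := E1 k 0 i (by omega) hik
      have : RC (g' (A k 0)) (g' (A k i)) := F1' _ _ hrc
      rw [← hA0] at this
      obtain ⟨i', hi', heq⟩ := E2 k' i₀ hi₀ _ this
      exact (hPmem k' _).2 ⟨i', hi', heq.symm⟩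
    refine ⟨k', ?_, hmem⟩
    -- cardinality comparison
    have hsub : (P k).image (fun x => g' x) ⊆ P k' := by
      intro y hy
      obtain ⟨x, hx, rfl⟩ := Finset.mem_image.1 hy
      obtain ⟨i, hik, rfl⟩ := (hPmem k x).1 hx
      exact hmem i hik
    have hcard := Finset.card_le_card hsub
    rw [Finset.card_image_of_injective _ g'.injective, hPcard, hPcard] at hcard
    omega
  have hPfix : ∀ k i, i ≤ k → g (A k i) ∈ P k := by
    intro k i hik
    obtain ⟨k', hk', hmem⟩ := himg g hg k
    have hgsymm : ∀ x, Red (g.symm x) ↔ Red x := by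
      intro x
      have := hg (g.symm x)
      simpa using this.symm
    obtain ⟨k'', hk'', hmem'⟩ := himg g.symm hgsymm k'
    -- A k 0 ∈ P k''
    have h1 : g (A k 0) ∈ P k' := hmem 0 (by omega)
    obtain ⟨i₁, hi₁, hAi₁⟩ := (hPmem k' _).1 h1
    have h2 : g.symm (A k' i₁) ∈ P k'' := hmem' i₁ hi₁
    rw [hAi₁] at h2
    simp only [RelIso.symm_apply_apply] at h2
    obtain ⟨i₂, hi₂, hAi₂⟩ := (hPmem k'' _).1 h2
    have : k'' = k := by
      by_contra hne
      exact D2 k'' k i₂ 0 hne hi₂ (by omega) hAi₂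
    have hkk : k' = k := by omega
    exact hkk ▸ hmem i hik
  have F3 : g (A 0 0) = A 0 0 := by
    have := hPfix 0 0 le_rfl
    obtain ⟨i', hi', heq⟩ := (hPmem 0 _).1 this
    have : i' = 0 := by omega
    rw [this] at heq
    exact heq.symm
  have F4 : ∀ k i, i ≤ k → g (A k i) = A k i := by
    intro k i hik
    rcases Nat.eq_zero_or_pos k with rfl | hk
    · have : i = 0 := by omega
      subst this
      exact F3
    · obtain ⟨i', hi', heq⟩ := (hPmem k _).1 (hPfix k i hik)
      have hdist : G.dist (A 0 0) (A k i') = G.dist (A 0 0) (A k i) := by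
        have h5 := iso_dist' g (A 0 0) (A k i)
        rw [F3] at h5
        rw [← heq] at h5
        exact h5
      have : i' = i := by
        by_contra hne
        rcases Nat.lt_or_ge i' i with hlt | hge
        · have := spec2A k _ (s0mem k hk) i' i hlt
          omega
        · have hlt : i < i' := by omega
          have := spec2A k _ (s0mem k hk) i i' hlt
          omega
      rw [this] at heq
      exact heq.symm
  -- conclusion
  intro v
  by_contra hv
  obtain ⟨k, hk⟩ := hprsur (g v) v (fun h => hv h)
  have h4 := spec4A k 0
  rw [hk] at h4
  have h4' : G.dist (A k 0) v < G.dist (A k 0) (g v) := by simpa using h4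
  have h5 : G.dist (A k 0) (g v) = G.dist (A k 0) v := by
    have h6 := iso_dist' g (A k 0) v
    rw [F4 k 0 (by omega)] at h6
    exact h6
  omega


end DistinguishingAux

noncomputable def distinguishingNumber {V : Type*} (G : SimpleGraph V) : ℕ :=
  sInf {n : ℕ | ∃ c : V → Fin n, ∀ g : G ≃g G, (∀ v : V, c (g v) = c v) → ∀ v : V, g v = v}

/-- Every denumerable vertex-transitive graph of connectivity 1 (connected with a cut
vertex) has distinguishing number 2. -/
theorem stmt7 {V : Type*} [Countable V] [Infinite V] (G : SimpleGraph V)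
    (hconn : G.Connected)
    (htrans : ∀ u v : V, ∃ g : G ≃g G, g u = v)
    (hcut : ∃ δ : V, ¬ (G.induce {v : V | v ≠ δ}).Connected) :
    distinguishingNumber G = 2 := by
  classical
  haveI : Nonempty V := hconn.nonempty
  have hcutall : ∀ w, IsCutVtx G w := isCut_all' htrans hcut
  have h2 : 2 ∈ {n : ℕ | ∃ c : V → Fin n, ∀ g : G ≃g G,
      (∀ v : V, c (g v) = c v) → ∀ v : V, g v = v} :=
    main_coloring hconn hcutall
  have hlb : ∀ n ∈ {n : ℕ | ∃ c : V → Fin n, ∀ g : G ≃g G,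
      (∀ v : V, c (g v) = c v) → ∀ v : V, g v = v}, 2 ≤ n := by
    intro n hn
    obtain ⟨c, hc⟩ := hn
    by_contra hlt
    push_neg at hlt
    interval_cases n
    · exact (c (Classical.arbitrary V)).elim0
    · obtain ⟨x, y, hxy⟩ := exists_pair_ne V
      obtain ⟨g, hgxy⟩ := htrans x y
      have hx : g x = x := hc g (fun v => Subsingleton.elim _ _) x
      exact hxy (by rw [← hgxy, hx])
  exact le_antisymm (Nat.sInf_le h2) (le_csInf ⟨2, h2⟩ hlb)
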